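/- For all real x in (0,2) with x ≥ 2e/q² and integer q ≥ 3, the function f(x) = x - h(x/2)·log_q(2) is nonnegative, where h is the binary entropy function h(y) = -y·log₂(y) - (1-y)·log₂(1-y). -/

import Mathlib

open Real

noncomputable def binEnt (y : ℝ) : ℝ := -(y * Real.logb 2 y) - (1 - y) * Real.logb 2 (1 - y)

theorem stmt_0 (q : ℤ) (hq : 3 ≤ q) (x : ℝ) (hx0 : 0 < x) (hx2 : x < 2)
    (hxe : 2 * Real.exp 1 / (q : ℝ) ^ 2 ≤ x) :
    0 ≤ x - binEnt (x / 2) * (Real.log 2 / Real.log (q : ℝ)) := by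
  have hq3 : (3 : ℝ) ≤ (q : ℝ) := by exact_mod_cast hq
  have hlq : 0 < Real.log (q : ℝ) := Real.log_pos (by linarith)
  have hl2 : 0 < Real.log 2 := Real.log_pos (by norm_num)
  set y := x / 2 with hy
  have hy0 : 0 < y := by positivity
  have hy1 : y < 1 := by rw [hy]; linarith
  have h1y : 0 < 1 - y := by linarith
  have hkey : binEnt y * Real.log 2 = -(y * Real.log y) - (1 - y) * Real.log (1 - y) := by
    unfold binEnt
    rw [Real.logb, Real.logb]
    field_simp
  -- Step A : -(1-y) log(1-y) ≤ y
  have hA : -((1 - y) * Real.log (1 - y)) ≤ y := by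
    have h1 : Real.log ((1 - y)⁻¹) ≤ (1 - y)⁻¹ - 1 :=
      Real.log_le_sub_one_of_pos (by positivity)
    rw [Real.log_inv] at h1
    have h2 : (1 - y) * (-Real.log (1 - y)) ≤ (1 - y) * ((1 - y)⁻¹ - 1) :=
      mul_le_mul_of_nonneg_left h1 h1y.le
    have h3 : (1 - y) * ((1 - y)⁻¹ - 1) = y := by
      field_simp
      ring
    linarith [h2, h3.symm ▸ h2]
  -- Step B : -log y ≤ 2 log q - 1
  have hB : -Real.log y ≤ 2 * Real.log (q : ℝ) - 1 := by
    have hqpos : (0 : ℝ) < (q : ℝ) ^ 2 := by positivity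
    have he : Real.exp 1 ≤ y * (q : ℝ) ^ 2 := by
      have := (div_le_iff₀ hqpos).mp hxe
      rw [hy]; nlinarith
    have hdiv : Real.exp 1 / y ≤ (q : ℝ) ^ 2 := (div_le_iff₀ hy0).mpr (by linarith)
    have hlog := Real.log_le_log (by positivity) hdiv
    rw [Real.log_div (Real.exp_ne_zero 1) hy0.ne', Real.log_exp, Real.log_pow] at hlog
    push_cast at hlog
    linarith
  -- combine
  have hmul : y * (-Real.log y) ≤ y * (2 * Real.log (q : ℝ) - 1) :=
    mul_le_mul_of_nonneg_left hB hy0.le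
  have hnum : -(y * Real.log y) - (1 - y) * Real.log (1 - y) ≤ 2 * y * Real.log (q : ℝ) := by
    nlinarith
  have hx2y : x = 2 * y := by rw [hy]; ring
  have hfin : binEnt y * (Real.log 2 / Real.log (q : ℝ)) ≤ x := by
    rw [hx2y]
    have : binEnt y * (Real.log 2 / Real.log (q : ℝ))
        = (binEnt y * Real.log 2) / Real.log (q : ℝ) := by ring
    rw [this, hkey, div_le_iff₀ hlq]
    linarith
  linarith
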